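/- Let H be a real Hilbert space, V a closed vector subspace of H, and T : H → H an α-averaged nonexpansive operator for some α ∈ (0,1). Then the operator M = P_V ∘ T ∘ P_V + P_{V⊥} is α-averaged nonexpansive, where P_V and P_{V⊥} denote the orthogonal projections onto V and its orthogonal complement. -/

import Mathlib

theorem stmt0 {H : Type*} [NormedAddCommGroup H] [InnerProductSpace ℝ H] [CompleteSpace H]
    (V : Submodule ℝ H) [CompleteSpace V]
    (T : H → H) (α : ℝ) (hα : α ∈ Set.Ioo (0 : ℝ) 1)
    (hT : ∀ x y : H, ‖T x - T y‖ ^ 2 ≤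
      ‖x - y‖ ^ 2 - ((1 - α) / α) * ‖(x - T x) - (y - T y)‖ ^ 2)
    (M : H → H)
    (hM : ∀ x : H, M x = (Submodule.orthogonalProjection V (T (Submodule.orthogonalProjection V x)) : H)
      + (x - (Submodule.orthogonalProjection V x : H))) :
    ∀ x y : H, ‖M x - M y‖ ^ 2 ≤
      ‖x - y‖ ^ 2 - ((1 - α) / α) * ‖(x - M x) - (y - M y)‖ ^ 2 := by
  intro x y
  set P : H → H := fun z => (Submodule.orthogonalProjection V z : H) with hP
  have hPle : ∀ z : H, ‖P z‖ ≤ ‖z‖ := fun z =>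
    (Submodule.orthogonalProjection V).le_opNorm z |>.trans
      (by nlinarith [Submodule.orthogonalProjectionOnto_norm_le V, norm_nonneg z,
        norm_nonneg (Submodule.orthogonalProjection V)])
  have hc : (0:ℝ) ≤ (1 - α) / α := by
    obtain ⟨h0, h1⟩ := hα
    exact div_nonneg (by linarith) h0.le
  -- orthogonal decomposition pieces
  have ha : P (T (P x)) - P (T (P y)) ∈ V := sub_mem (by simp [hP]) (by simp [hP])
  have hb : (x - P x) - (y - P y) ∈ Vᗮ :=
    sub_mem (Submodule.sub_starProjection_mem_orthogonal (K := V) x)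
      (Submodule.sub_starProjection_mem_orthogonal (K := V) y)
  have hab : (inner (𝕜 := ℝ) (P (T (P x)) - P (T (P y))) ((x - P x) - (y - P y))) = 0 :=
    Submodule.inner_right_of_mem_orthogonal ha hb
  have hxy : P x - P y ∈ V := sub_mem (by simp [hP]) (by simp [hP])
  have hab2 : (inner (𝕜 := ℝ) (P x - P y) ((x - P x) - (y - P y))) = 0 :=
    Submodule.inner_right_of_mem_orthogonal hxy hb
  -- M x - M y decomposition
  have hMd : M x - M y = (P (T (P x)) - P (T (P y))) + ((x - P x) - (y - P y)) := by
    rw [hM x, hM y]; abel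
  have hxyd : x - y = (P x - P y) + ((x - P x) - (y - P y)) := by abel
  have h1 : ‖M x - M y‖ ^ 2 = ‖P (T (P x)) - P (T (P y))‖ ^ 2 + ‖(x - P x) - (y - P y)‖ ^ 2 := by
    rw [hMd, norm_add_sq_real, hab]; ring
  have h2 : ‖x - y‖ ^ 2 = ‖P x - P y‖ ^ 2 + ‖(x - P x) - (y - P y)‖ ^ 2 := by
    rw [hxyd, norm_add_sq_real, hab2]; ring
  -- residual
  have hres : (x - M x) - (y - M y) = P ((P x - T (P x)) - (P y - T (P y))) := by
    rw [hM x, hM y]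
    simp only [hP, map_sub, Submodule.coe_sub, Submodule.orthogonalProjection_mem_subspace_eq_self]
    abel
  have hresle : ‖(x - M x) - (y - M y)‖ ≤ ‖(P x - T (P x)) - (P y - T (P y))‖ := by
    rw [hres]; exact hPle _
  have hTkey := hT (P x) (P y)
  have hPa : ‖P (T (P x)) - P (T (P y))‖ ≤ ‖T (P x) - T (P y)‖ := by
    have : P (T (P x)) - P (T (P y)) = P (T (P x) - T (P y)) := by
      simp [hP, map_sub]
    rw [this]; exact hPle _
  have hsq : ‖(x - M x) - (y - M y)‖ ^ 2 ≤ ‖(P x - T (P x)) - (P y - T (P y))‖ ^ 2 := by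
    apply pow_le_pow_left₀ (norm_nonneg _) hresle
  have hsq2 : ‖P (T (P x)) - P (T (P y))‖ ^ 2 ≤ ‖T (P x) - T (P y)‖ ^ 2 :=
    pow_le_pow_left₀ (norm_nonneg _) hPa 2
  nlinarith [mul_le_mul_of_nonneg_left hsq hc]
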